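/- If every component of a finite graph G is a tree or a unicyclic graph, then χ_P(G) ≤ 3. -/

import Mathlib

variable {V : Type*}

/-- `I` is an independent set in `G`. -/
def IndepIn (G : SimpleGraph V) (I : Finset V) : Prop :=
  ∀ u ∈ I, ∀ v ∈ I, ¬ G.Adj u v

/-- The paint game with fuel `n`: the set `A` of uncoloured vertices, with token
function `f`, can be fully coloured by Mrs. Correct within `n` rounds. -/
def PaintableAux [DecidableEq V] (G : SimpleGraph V) : ℕ → Finset V → (V → ℕ) → Prop
  | 0, A, _ => A = ∅
  | n + 1, A, f => (∀ v ∈ A, 1 ≤ f v) ∧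
      ∀ S ⊆ A, S.Nonempty → ∃ I ⊆ S, IndepIn G I ∧
        PaintableAux G n (A \ I) (fun v => if v ∈ S \ I then f v - 1 else f v)

/-- Mrs. Correct wins the paint game on the uncoloured vertex set `A` with token
function `f` (a vertex with `f v = k` can be erased `k - 1` times).  Since each round
strictly decreases the total number of tokens on uncoloured vertices, the game is
finite and this is equivalent to the usual inductive definition of paintability. -/
def Paintable [DecidableEq V] (G : SimpleGraph V) (A : Finset V) (f : V → ℕ) : Prop :=
  ∃ n, PaintableAux G n A f

/-- `G` is `k`-paintable: Mrs. Correct wins with `k - 1` erasers at each vertex. -/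
def IsPaintable [Fintype V] [DecidableEq V] (G : SimpleGraph V) (k : ℕ) : Prop :=
  Paintable G Finset.univ fun _ => k

/-- The paintability (on-line choice number) `χ_P`. -/
noncomputable def chiP [Fintype V] [DecidableEq V] (G : SimpleGraph V) : ℕ :=
  sInf {k | IsPaintable G k}


section Helpers

open scoped Classical

variable [Fintype V] [DecidableEq V]

noncomputable def EW (G : SimpleGraph V) (A : Finset V) : Finset (Sym2 V) :=
  Finset.univ.filter (fun e => e ∈ G.edgeSet ∧ ∀ v ∈ e, v ∈ A)

noncomputable def nbrs (G : SimpleGraph V) (A : Finset V) (v : V) : Finset V :=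
  A.filter (fun u => G.Adj v u)

lemma mem_EW {G : SimpleGraph V} {A : Finset V} {e : Sym2 V} :
    e ∈ EW G A ↔ e ∈ G.edgeSet ∧ ∀ v ∈ e, v ∈ A := by
  simp [EW]

lemma sum_nbrs (G : SimpleGraph V) (B : Finset V) :
    ∑ v ∈ B, (nbrs G B v).card = 2 * (EW G B).card := by
  classical
  set P := (B ×ˢ B).filter (fun p => G.Adj p.1 p.2) with hP
  have h1 : P.card = ∑ v ∈ B, (nbrs G B v).card := by
    rw [Finset.card_eq_sum_card_fiberwise (f := Prod.fst) (t := B)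
      (by intro p hp; simp only [hP, Finset.mem_coe, Finset.mem_filter, Finset.mem_product] at hp; exact hp.1.1)]
    refine Finset.sum_congr rfl fun v hv => ?_
    refine Finset.card_bij (fun p _ => p.2) ?_ ?_ ?_
    · intro p hp
      simp only [hP, Finset.mem_filter, Finset.mem_product] at hp
      obtain ⟨⟨⟨-, hb⟩, hadj⟩, h1⟩ := hp
      simp only [nbrs, Finset.mem_filter]
      exact ⟨hb, h1 ▸ hadj⟩
    · intro p hp q hq hpq
      simp only [Finset.mem_filter] at hp hq
      exact Prod.ext (hp.2.trans hq.2.symm) hpq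
    · intro u hu
      simp only [nbrs, Finset.mem_filter] at hu
      exact ⟨(v, u), by simp [hP, hv, hu.1, hu.2], rfl⟩
  have h2 : P.card = 2 * (EW G B).card := by
    rw [Finset.card_eq_sum_card_fiberwise (f := fun p => Sym2.mk p.1 p.2) (t := EW G B)
      (by
        intro p hp
        simp only [hP, Finset.mem_coe, Finset.mem_filter, Finset.mem_product] at hp
        rw [Finset.mem_coe, mem_EW]
        refine ⟨hp.2, ?_⟩
        intro v hv
        rw [Sym2.mem_iff] at hv
        rcases hv with rfl | rfl
        exacts [hp.1.1, hp.1.2])]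
    have hfib : ∀ e ∈ EW G B, (P.filter fun p => Sym2.mk p.1 p.2 = e).card = 2 := by
      intro e he
      induction e using Sym2.ind with
      | _ a b =>
        rw [mem_EW] at he
        have hadj : G.Adj a b := he.1
        have hne : a ≠ b := G.ne_of_adj hadj
        have ha : a ∈ B := he.2 a (Sym2.mem_mk_left a b)
        have hb : b ∈ B := he.2 b (Sym2.mem_mk_right a b)
        have : (P.filter fun p => Sym2.mk p.1 p.2 = s(a, b)) = {(a, b), (b, a)} := by
          ext ⟨x, y⟩
          simp only [hP, Finset.mem_filter, Finset.mem_product, Finset.mem_insert,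
            Finset.mem_singleton, Prod.mk.injEq, Sym2.eq_iff]
          constructor
          · rintro ⟨⟨⟨hx, hy⟩, hxy⟩, (⟨rfl, rfl⟩ | ⟨rfl, rfl⟩)⟩
            · exact Or.inl ⟨rfl, rfl⟩
            · exact Or.inr ⟨rfl, rfl⟩
          · rintro (⟨rfl, rfl⟩ | ⟨rfl, rfl⟩)
            · exact ⟨⟨⟨ha, hb⟩, hadj⟩, Or.inl ⟨rfl, rfl⟩⟩
            · exact ⟨⟨⟨hb, ha⟩, hadj.symm⟩, Or.inr ⟨rfl, rfl⟩⟩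
        rw [this]
        rw [Finset.card_insert_of_notMem (by simp [Prod.ext_iff]; intro h; exact absurd h hne),
          Finset.card_singleton]
    rw [Finset.sum_congr rfl hfib, Finset.sum_const, smul_eq_mul, mul_comm]
  omega

lemma EW_mono (G : SimpleGraph V) {A B : Finset V} (h : A ⊆ B) : EW G A ⊆ EW G B := by
  intro e he
  rw [mem_EW] at he ⊢
  exact ⟨he.1, fun v hv => h (he.2 v hv)⟩

lemma EW_empty (G : SimpleGraph V) : EW G (∅ : Finset V) = ∅ := by
  ext e
  induction e using Sym2.ind with
  | _ a b =>
    simp only [mem_EW, Finset.notMem_empty, iff_false, not_and]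
    intro _ h
    exact h a (Sym2.mem_mk_left a b)

lemma ew_le_of_supp (G : SimpleGraph V) (C : G.ConnectedComponent)
    (hC : (EW G C.supp.toFinset).card ≤ C.supp.toFinset.card) :
    ∀ (k : ℕ) (B : Finset V), B ⊆ C.supp.toFinset →
      C.supp.toFinset.card - B.card ≤ k → (EW G B).card ≤ B.card := by
  intro k
  induction k with
  | zero =>
    intro B hB hk
    have : B = C.supp.toFinset :=
      Finset.eq_of_subset_of_card_le hB (by omega)
    rw [this]; exact hC
  | succ k ih =>
    intro B hB hk
    rcases eq_or_ne B C.supp.toFinset with rfl | hne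
    · exact hC
    rcases B.eq_empty_or_nonempty with rfl | hBne
    · simp [EW_empty]
    obtain ⟨b0, hb0⟩ := hBne
    obtain ⟨y, hy, hyB⟩ := Finset.exists_of_ssubset (hB.ssubset_of_ne hne)
    have hb0s : b0 ∈ C.supp := Set.mem_toFinset.mp (hB hb0)
    have hys : y ∈ C.supp := Set.mem_toFinset.mp hy
    have hreach : G.Reachable b0 y := by
      rw [SimpleGraph.ConnectedComponent.mem_supp_iff] at hb0s hys
      exact SimpleGraph.ConnectedComponent.exact (hb0s.trans hys.symm)
    obtain ⟨d, -, hd1, hd2⟩ :=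
      hreach.some.exists_boundary_dart (↑B : Set V) (by exact_mod_cast hb0) (by exact_mod_cast hyB)
    set b := d.fst
    set x := d.snd
    have hadj : G.Adj b x := d.adj
    have hbB : b ∈ B := by exact_mod_cast hd1
    have hxB : x ∉ B := by exact_mod_cast hd2
    have hxs : x ∈ C.supp.toFinset := by
      rw [Set.mem_toFinset, SimpleGraph.ConnectedComponent.mem_supp_iff]
      have : b ∈ C.supp := Set.mem_toFinset.mp (hB hbB)
      rw [SimpleGraph.ConnectedComponent.mem_supp_iff] at this
      rw [← this]
      exact SimpleGraph.ConnectedComponent.eq.mpr hadj.symm.reachable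
    have hB' : insert x B ⊆ C.supp.toFinset := by
      intro z hz
      rcases Finset.mem_insert.mp hz with rfl | hz
      · exact hxs
      · exact hB hz
    have hcard' : (insert x B).card = B.card + 1 := Finset.card_insert_of_notMem hxB
    have hstep := ih (insert x B) hB' (by omega)
    have hsub : insert (s(b, x)) (EW G B) ⊆ EW G (insert x B) := by
      intro e he
      rcases Finset.mem_insert.mp he with rfl | he
      · rw [mem_EW]
        refine ⟨hadj, ?_⟩
        intro v hv
        rcases Sym2.mem_iff.mp hv with rfl | rfl
        · exact Finset.mem_insert_of_mem hbB
        · exact Finset.mem_insert_self _ _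
      · exact EW_mono G (Finset.subset_insert x B) he
    have hnm : s(b, x) ∉ EW G B := by
      rw [mem_EW]
      rintro ⟨-, hall⟩
      exact hxB (hall x (Sym2.mem_mk_right b x))
    have := Finset.card_le_card hsub
    rw [Finset.card_insert_of_notMem hnm] at this
    omega

lemma exists_low_deg (G : SimpleGraph V)
    (h : ∀ C : G.ConnectedComponent,
      {e : Sym2 V | e ∈ G.edgeSet ∧ ∀ v ∈ e, v ∈ C.supp}.ncard ≤ C.supp.ncard) :
    ∀ A : Finset V, A.Nonempty → ∃ v ∈ A, (nbrs G A v).card ≤ 2 := by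
  intro A ⟨a, ha⟩
  set C := G.connectedComponentMk a with hCdef
  have hC : (EW G C.supp.toFinset).card ≤ C.supp.toFinset.card := by
    have h1 : {e : Sym2 V | e ∈ G.edgeSet ∧ ∀ v ∈ e, v ∈ C.supp} = ↑(EW G C.supp.toFinset) := by
      ext e
      simp [mem_EW, Set.mem_toFinset]
    have := h C
    rw [h1, Set.ncard_coe_finset, Set.ncard_eq_toFinset_card'] at this
    exact this
  set B := A ∩ C.supp.toFinset with hBdef
  have hBsub : B ⊆ C.supp.toFinset := Finset.inter_subset_right
  have haB : a ∈ B := by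
    rw [hBdef, Finset.mem_inter]
    exact ⟨ha, by rw [Set.mem_toFinset]; exact SimpleGraph.ConnectedComponent.mem_supp_iff _ _ |>.mpr rfl⟩
  have hEWB : (EW G B).card ≤ B.card :=
    ew_le_of_supp G C hC C.supp.toFinset.card B hBsub (by omega)
  -- min degree in B
  have hmin : ∃ v ∈ B, (nbrs G B v).card ≤ 2 := by
    by_contra hcon
    push_neg at hcon
    have hsum : 3 * B.card ≤ ∑ v ∈ B, (nbrs G B v).card := by
      calc 3 * B.card = ∑ _v ∈ B, 3 := by rw [Finset.sum_const, smul_eq_mul, mul_comm]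
        _ ≤ _ := Finset.sum_le_sum fun v hv => hcon v hv
    rw [sum_nbrs] at hsum
    have hBpos : 0 < B.card := Finset.card_pos.mpr ⟨a, haB⟩
    omega
  obtain ⟨v, hvB, hv2⟩ := hmin
  refine ⟨v, Finset.mem_inter.mp hvB |>.1, ?_⟩
  have : nbrs G A v = nbrs G B v := by
    ext u
    simp only [nbrs, Finset.mem_filter, hBdef, Finset.mem_inter]
    constructor
    · rintro ⟨huA, hadj⟩
      refine ⟨⟨huA, ?_⟩, hadj⟩
      have hvC : v ∈ C.supp := Set.mem_toFinset.mp (hBsub hvB)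
      rw [SimpleGraph.ConnectedComponent.mem_supp_iff] at hvC
      rw [Set.mem_toFinset, SimpleGraph.ConnectedComponent.mem_supp_iff, ← hvC]
      exact SimpleGraph.ConnectedComponent.eq.mpr hadj.symm.reachable
    · rintro ⟨⟨huA, -⟩, hadj⟩
      exact ⟨huA, hadj⟩
  rw [this]
  exact hv2

lemma exists_order (G : SimpleGraph V)
    (helim : ∀ A : Finset V, A.Nonempty → ∃ v ∈ A, (nbrs G A v).card ≤ 2) :
    ∀ (n : ℕ) (A : Finset V), A.card = n → ∃ ord : V → ℕ, Set.InjOn ord ↑A ∧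
      ∀ v ∈ A, (A.filter fun u => G.Adj v u ∧ ord u < ord v).card ≤ 2 := by
  intro n
  induction n with
  | zero =>
    intro A hA
    rw [Finset.card_eq_zero] at hA
    subst hA
    exact ⟨fun _ => 0, by simp [Set.InjOn], by simp⟩
  | succ n ih =>
    intro A hA
    have hAne : A.Nonempty := Finset.card_pos.mp (by omega)
    obtain ⟨v, hvA, hv2⟩ := helim A hAne
    set A' := A.erase v with hA'def
    have hcard' : A'.card = n := by
      rw [hA'def, Finset.card_erase_of_mem hvA, hA]; omega
    obtain ⟨ord', hinj', hbd'⟩ := ih A' hcard'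
    set N := (A'.sup ord') + 1 with hNdef
    have hlt : ∀ u ∈ A', ord' u < N := fun u hu =>
      Nat.lt_succ_of_le (Finset.le_sup hu)
    refine ⟨fun u => if u = v then N else ord' u, ?_, ?_⟩
    · intro x hx y hy hxy
      simp only at hxy
      by_cases hxv : x = v <;> by_cases hyv : y = v
      · rw [hxv, hyv]
      · rw [if_pos hxv, if_neg hyv] at hxy
        have hyA' : y ∈ A' := Finset.mem_erase.mpr ⟨hyv, hy⟩
        exact absurd hxy.symm (Nat.ne_of_lt (hlt y hyA'))
      · rw [if_neg hxv, if_pos hyv] at hxy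
        have hxA' : x ∈ A' := Finset.mem_erase.mpr ⟨hxv, hx⟩
        exact absurd hxy (Nat.ne_of_lt (hlt x hxA'))
      · rw [if_neg hxv, if_neg hyv] at hxy
        exact hinj' (Finset.mem_erase.mpr ⟨hxv, hx⟩) (Finset.mem_erase.mpr ⟨hyv, hy⟩) hxy
    · intro w hwA
      by_cases hwv : w = v
      · subst hwv
        refine le_trans (Finset.card_le_card ?_) hv2
        intro u hu
        rw [Finset.mem_filter] at hu
        exact Finset.mem_filter.mpr ⟨hu.1, hu.2.1⟩
      · have hwA' : w ∈ A' := Finset.mem_erase.mpr ⟨hwv, hwA⟩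
        have : (A.filter fun u => G.Adj w u ∧ (if u = v then N else ord' u) < (if w = v then N else ord' w))
            = A'.filter fun u => G.Adj w u ∧ ord' u < ord' w := by
          ext u
          simp only [Finset.mem_filter, hA'def, Finset.mem_erase, if_neg hwv]
          constructor
          · rintro ⟨huA, hadj, hord⟩
            by_cases huv : u = v
            · rw [if_pos huv] at hord
              exact absurd hord (not_lt.mpr (le_of_lt (hlt w hwA')))
            · rw [if_neg huv] at hord
              exact ⟨⟨huv, huA⟩, hadj, hord⟩
          · rintro ⟨⟨huv, huA⟩, hadj, hord⟩
            rw [if_neg huv]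
            exact ⟨huA, hadj, hord⟩
        rw [this]
        exact hbd' w hwA'

open scoped Classical in
noncomputable def sel (G : SimpleGraph V) (S : Finset V) (ord : V → ℕ) (v : V) : Prop :=
  v ∈ S ∧ ∀ u, u ∈ S → G.Adj v u → ord u < ord v → ¬ sel G S ord u
termination_by ord v
decreasing_by assumption

lemma paint_lemma (G : SimpleGraph V) (ord : V → ℕ)
    (hinj : Function.Injective ord) :
    ∀ (n : ℕ) (A : Finset V) (f : V → ℕ), A.card ≤ n →
      (∀ v ∈ A, (A.filter fun u => G.Adj v u ∧ ord u < ord v).card < f v) →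
      PaintableAux G n A f := by
  intro n
  induction n with
  | zero =>
    intro A f hcard _
    exact Finset.card_eq_zero.mp (Nat.le_zero.mp hcard)
  | succ n ih =>
    intro A f hcard hinv
    refine ⟨fun v hv => ?_, fun S hS hSne => ?_⟩
    · have := hinv v hv; omega
    · set I := S.filter (sel G S ord) with hIdef
      have hIsub : I ⊆ S := Finset.filter_subset _ _
      have hIA : I ⊆ A := hIsub.trans hS
      have hindep : IndepIn G I := by
        intro u hu w hw hadj
        have hsu : sel G S ord u := (Finset.mem_filter.mp hu).2
        have hsw : sel G S ord w := (Finset.mem_filter.mp hw).2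
        have hne : ord u ≠ ord w := fun he => G.ne_of_adj hadj (hinj he)
        rcases lt_or_gt_of_ne hne with hlt | hlt
        · rw [sel] at hsw
          exact hsw.2 u (Finset.mem_filter.mp hu).1 hadj.symm hlt hsu
        · rw [sel] at hsu
          exact hsu.2 w (Finset.mem_filter.mp hw).1 hadj hlt hsw
      have hIne : I.Nonempty := by
        obtain ⟨v0, hv0S, hmin⟩ := S.exists_min_image ord hSne
        refine ⟨v0, Finset.mem_filter.mpr ⟨hv0S, ?_⟩⟩
        rw [sel]
        exact ⟨hv0S, fun u hu _ hlt _ => absurd hlt (not_lt.mpr (hmin u hu))⟩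
      refine ⟨I, hIsub, hindep, ?_⟩
      apply ih
      · have h1 : (A \ I).card = A.card - I.card := Finset.card_sdiff_of_subset hIA
        have h2 : 1 ≤ I.card := Finset.card_pos.mpr hIne
        omega
      · intro v hv
        obtain ⟨hvA, hvI⟩ := Finset.mem_sdiff.mp hv
        by_cases hvS : v ∈ S
        · have hnsel : ¬ sel G S ord v := fun hs => hvI (Finset.mem_filter.mpr ⟨hvS, hs⟩)
          rw [sel, not_and] at hnsel
          have hex := hnsel hvS
          push_neg at hex
          obtain ⟨u, huS, hadj, hlt, hselu⟩ := hex
          have huI : u ∈ I := Finset.mem_filter.mpr ⟨huS, hselu⟩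
          have huA : u ∈ A := hS huS
          set T := A.filter (fun w => G.Adj v w ∧ ord w < ord v) with hTdef
          have huT : u ∈ T := Finset.mem_filter.mpr ⟨huA, hadj, hlt⟩
          have hsubT : ((A \ I).filter fun w => G.Adj v w ∧ ord w < ord v) ⊆ T.erase u := by
            intro w hw
            rw [Finset.mem_filter, Finset.mem_sdiff] at hw
            refine Finset.mem_erase.mpr ⟨fun he => hw.1.2 (he ▸ huI), ?_⟩
            exact Finset.mem_filter.mpr ⟨hw.1.1, hw.2⟩
          have hTcard : T.card < f v := hinv v hvA
          have hle := (Finset.card_le_card hsubT).trans_eq (Finset.card_erase_of_mem huT)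
          have hTpos : 0 < T.card := Finset.card_pos.mpr ⟨u, huT⟩
          have hvSI : v ∈ S \ I := Finset.mem_sdiff.mpr ⟨hvS, hvI⟩
          simp only [if_pos hvSI]
          omega
        · have hvSI : v ∉ S \ I := fun hc => hvS (Finset.mem_sdiff.mp hc).1
          simp only [if_neg hvSI]
          refine lt_of_le_of_lt (Finset.card_le_card ?_) (hinv v hvA)
          intro w hw
          rw [Finset.mem_filter, Finset.mem_sdiff] at hw
          exact Finset.mem_filter.mpr ⟨hw.1.1, hw.2⟩


end Helpers

/-- If every connected component of a finite graph `G` is a tree or unicyclic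
(i.e., spans at most as many edges as vertices), then `χ_P(G) ≤ 3`. -/
theorem chiP_le_three_of_components_unicyclic [Fintype V] [DecidableEq V]
    (G : SimpleGraph V)
    (h : ∀ C : G.ConnectedComponent,
      {e : Sym2 V | e ∈ G.edgeSet ∧ ∀ v ∈ e, v ∈ C.supp}.ncard ≤ C.supp.ncard) :
    chiP G ≤ 3 := by
  classical
  have helim := exists_low_deg G h
  obtain ⟨ord, hinj, hbd⟩ := exists_order G helim Finset.univ.card Finset.univ rfl
  have hinj' : Function.Injective ord := fun x y hxy =>
    hinj (by simp) (by simp) hxy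
  have hPA : PaintableAux G Finset.univ.card Finset.univ (fun _ => 3) :=
    paint_lemma G ord hinj' Finset.univ.card Finset.univ (fun _ => 3) le_rfl
      (fun v hv => lt_of_le_of_lt (hbd v hv) (by norm_num))
  have hp : IsPaintable G 3 := ⟨Finset.univ.card, hPA⟩
  exact Nat.sInf_le hp
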